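/- For a weighted graph G and an edge e of G, the chromatic symmetric function satisfies the deletion-contraction relation X_G = X_{G\e} - X_{G/e}, where G\e is G with e deleted and G/e is G with e contracted (the new vertex receiving the sum of the weights of the two endpoints of e). -/

import Mathlib

open scoped Classical

noncomputable section

/-- Coefficient of the monomial with exponent vector `d` in the chromatic symmetric
function of the weighted graph `(G, w)`: the number of proper colorings `κ : V → ℕ`
whose color-weight distribution is `d`. -/
def csfCoeff {V : Type*} [Fintype V] (G : SimpleGraph V) (w : V → ℕ) (d : ℕ →₀ ℕ) : ℕ :=
  Nat.card {κ : V → ℕ // (∀ u v, G.Adj u v → κ u ≠ κ v) ∧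
    ∀ i : ℕ, d i = ∑ v ∈ Finset.univ.filter (fun v => κ v = i), w v}

/-- The chromatic symmetric function of a weighted graph, as a formal power series in
countably many variables `x_0, x_1, x_2, …`. -/
def csf {V : Type*} [Fintype V] (G : SimpleGraph V) (w : V → ℕ) : MvPowerSeries ℕ ℚ :=
  fun d => (csfCoeff G w d : ℚ)

/-- Contraction of the pair `{u, v}` in `G`: vertex `v` is deleted and `u` becomes the
merged vertex, adjacent to all former neighbors of `u` or of `v`. -/
def SimpleGraph.contractEdge {V : Type*} (G : SimpleGraph V) (u v : V) :
    SimpleGraph {x : V // x ≠ v} where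
  Adj a b := a ≠ b ∧ (G.Adj a b ∨ (a.1 = u ∧ G.Adj v b) ∨ (b.1 = u ∧ G.Adj a v))
  symm := by
    constructor
    rintro a b ⟨hab, h | ⟨h1, h2⟩ | ⟨h1, h2⟩⟩
    · exact ⟨hab.symm, Or.inl h.symm⟩
    · exact ⟨hab.symm, Or.inr (Or.inr ⟨h1, h2.symm⟩)⟩
    · exact ⟨hab.symm, Or.inr (Or.inl ⟨h1, h2.symm⟩)⟩
  loopless := by constructor; rintro a ⟨h, -⟩; exact h rfl

/-- The weight function after contracting the edge `{u, v}`: the merged vertex `u`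
receives the sum of the weights of the two endpoints. -/
def contractWeight {V : Type*} [DecidableEq V] (w : V → ℕ) (u v : V) :
    {x : V // x ≠ v} → ℕ :=
  fun x => if x.1 = u then w u + w v else w x.1

lemma mem_supp_aux {V : Type*} [Fintype V] {w : V → ℕ} (hw : ∀ x, 0 < w x) {d : ℕ →₀ ℕ}
    {κ : V → ℕ} (hκ : ∀ i : ℕ, d i = ∑ v ∈ Finset.univ.filter (fun v => κ v = i), w v)
    (x : V) : κ x ∈ d.support := by
  rw [Finsupp.mem_support_iff]
  have h := hκ (κ x)
  have hx : x ∈ Finset.univ.filter (fun v => κ v = κ x) := by simp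
  have : w x ≤ d (κ x) := h ▸ Finset.single_le_sum (fun i _ => Nat.zero_le _) hx
  have := hw x
  omega

lemma csf_finite_aux {V : Type*} [Fintype V] (w : V → ℕ) (hw : ∀ x, 0 < w x) (d : ℕ →₀ ℕ)
    (P : (V → ℕ) → Prop) :
    Finite {κ : V → ℕ // P κ ∧
      ∀ i : ℕ, d i = ∑ v ∈ Finset.univ.filter (fun v => κ v = i), w v} := by
  have : Finite (V → {i // i ∈ d.support}) := inferInstance
  apply Finite.of_injective
    (f := fun (κ : {κ : V → ℕ // P κ ∧
        ∀ i : ℕ, d i = ∑ v ∈ Finset.univ.filter (fun v => κ v = i), w v})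
        (x : V) => (⟨κ.1 x, mem_supp_aux hw κ.2.2 x⟩ : {i // i ∈ d.support}))
  intro a b hab
  ext x
  exact congrArg Subtype.val (congrFun hab x)

lemma sum_filter_split {V : Type*} [Fintype V] [DecidableEq V] (v : V) (κ : V → ℕ) (i : ℕ) (f : V → ℕ) :
    ∑ y ∈ Finset.univ.filter (fun y => κ y = i), f y
      = (if κ v = i then f v else 0)
        + ∑ x ∈ Finset.univ.filter (fun x : {x : V // x ≠ v} => κ x.1 = i), f x.1 := by
  classical
  rw [Finset.sum_filter, Finset.sum_filter]
  rw [show (∑ x : {x : V // x ≠ v}, if κ x.1 = i then f x.1 else 0)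
      = ∑ y ∈ Finset.univ.erase v, if κ y = i then f y else 0 from
    (Finset.sum_subtype (p := fun y => y ≠ v) (Finset.univ.erase v)
      (fun x => by simp) (fun y => if κ y = i then f y else 0)).symm]
  rw [← Finset.add_sum_erase _ _ (Finset.mem_univ v)]

lemma contract_sum {V : Type*} [Fintype V] [DecidableEq V] (w : V → ℕ) (u v : V)
    (hne : u ≠ v) (κ' : {x : V // x ≠ v} → ℕ) (i : ℕ) :
    ∑ x ∈ Finset.univ.filter (fun x : {x : V // x ≠ v} => κ' x = i), contractWeight w u v x
      = (if κ' ⟨u, hne⟩ = i then w v else 0)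
        + ∑ x ∈ Finset.univ.filter (fun x : {x : V // x ≠ v} => κ' x = i), w x.1 := by
  have h1 : ∀ x : {x : V // x ≠ v}, contractWeight w u v x
      = (if x = (⟨u, hne⟩ : {x : V // x ≠ v}) then w v else 0) + w x.1 := by
    intro x
    unfold contractWeight
    rcases eq_or_ne x ⟨u, hne⟩ with h | h
    · subst h; simp [Nat.add_comm]
    · rw [if_neg h, if_neg (fun hx => h (Subtype.ext hx)), zero_add]
  rw [Finset.sum_congr rfl (fun x _ => h1 x), Finset.sum_add_distrib,
    Finset.sum_ite_eq' _ (⟨u, hne⟩ : {x : V // x ≠ v}) (fun _ => w v)]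
  simp

lemma csf_key {V : Type*} [Fintype V] [DecidableEq V]
    (G : SimpleGraph V) (w : V → ℕ) (hw : ∀ x, 0 < w x) (u v : V) (he : G.Adj u v)
    (d : ℕ →₀ ℕ) :
    csfCoeff (G.deleteEdges {s(u, v)}) w d
      = csfCoeff G w d + csfCoeff (G.contractEdge u v) (contractWeight w u v) d := by
  have hne : u ≠ v := he.ne
  haveI hB : Finite {κ : V → ℕ //
      (∀ a b, (G.deleteEdges {s(u, v)}).Adj a b → κ a ≠ κ b) ∧
      ∀ i : ℕ, d i = ∑ x ∈ Finset.univ.filter (fun x => κ x = i), w x} :=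
    csf_finite_aux w hw d _
  haveI hA : Finite {κ : V → ℕ // (∀ a b, G.Adj a b → κ a ≠ κ b) ∧
      ∀ i : ℕ, d i = ∑ x ∈ Finset.univ.filter (fun x => κ x = i), w x} :=
    csf_finite_aux w hw d _
  haveI hC : Finite {κ : {x : V // x ≠ v} → ℕ //
      (∀ a b, (G.contractEdge u v).Adj a b → κ a ≠ κ b) ∧
      ∀ i : ℕ, d i = ∑ x ∈ Finset.univ.filter (fun x => κ x = i),
        contractWeight w u v x} := by
    apply csf_finite_aux (contractWeight w u v) (fun x => ?_) d
    unfold contractWeight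
    have := hw u; have := hw x.1
    split <;> omega
  -- the equivalence splitting colorings of G \ e by whether u,v get equal colors
  unfold csfCoeff
  rw [← Nat.card_sum]
  apply Nat.card_congr
  refine (Equiv.sumCompl (fun κ : {κ : V → ℕ //
      (∀ a b, (G.deleteEdges {s(u, v)}).Adj a b → κ a ≠ κ b) ∧
      ∀ i : ℕ, d i = ∑ x ∈ Finset.univ.filter (fun x => κ x = i), w x} =>
        κ.1 u ≠ κ.1 v)).symm.trans (Equiv.sumCongr ?_ ?_)
  · -- colorings with κ u ≠ κ v  ≃  proper colorings of G
    refine ⟨fun κ => ⟨κ.1.1, ⟨fun a b hab => ?_, κ.1.2.2⟩⟩,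
            fun κ => ⟨⟨κ.1, ⟨fun a b hab => κ.2.1 a b
              (SimpleGraph.deleteEdges_adj.1 hab).1, κ.2.2⟩⟩,
              κ.2.1 u v he⟩, fun κ => rfl, fun κ => rfl⟩
    by_cases h : s(a, b) = s(u, v)
    · rcases Sym2.eq_iff.1 h with ⟨rfl, rfl⟩ | ⟨rfl, rfl⟩
      · exact κ.2
      · exact fun hh => κ.2 hh.symm
    · exact κ.1.2.1 a b (SimpleGraph.deleteEdges_adj.2 ⟨hab, by simpa using h⟩)
  · -- colorings with κ u = κ v  ≃  proper colorings of the contraction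
    refine ⟨fun κ => ⟨fun x => κ.1.1 x.1, ⟨?_, ?_⟩⟩, fun κ' =>
      ⟨⟨fun y => if h : y = v then κ'.1 ⟨u, hne⟩ else κ'.1 ⟨y, h⟩, ⟨?_, ?_⟩⟩, ?_⟩, ?_, ?_⟩
    · -- properness of restriction
      have hq : κ.1.1 u = κ.1.1 v := not_not.1 κ.2
      rintro a b ⟨hab, h | ⟨h1, h2⟩ | ⟨h1, h2⟩⟩
      · refine κ.1.2.1 a.1 b.1 (SimpleGraph.deleteEdges_adj.2 ⟨h, ?_⟩)
        simp only [Set.mem_singleton_iff, Sym2.eq_iff]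
        rintro (⟨-, hb⟩ | ⟨ha, -⟩)
        · exact b.2 hb
        · exact a.2 ha
      · have : κ.1.1 v ≠ κ.1.1 b.1 := by
          refine κ.1.2.1 v b.1 (SimpleGraph.deleteEdges_adj.2 ⟨h2, ?_⟩)
          simp only [Set.mem_singleton_iff, Sym2.eq_iff]
          rintro (⟨hv, -⟩ | ⟨-, hb⟩)
          · exact hne hv.symm
          · exact hab (Subtype.ext (h1.trans hb.symm))
        show κ.1.1 a.1 ≠ κ.1.1 b.1
        rw [h1, hq]; exact this
      · have : κ.1.1 a.1 ≠ κ.1.1 v := by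
          refine κ.1.2.1 a.1 v (SimpleGraph.deleteEdges_adj.2 ⟨h2, ?_⟩)
          simp only [Set.mem_singleton_iff, Sym2.eq_iff]
          rintro (⟨ha, -⟩ | ⟨ha, -⟩)
          · exact hab (Subtype.ext (ha.trans h1.symm))
          · exact a.2 ha
        show κ.1.1 a.1 ≠ κ.1.1 b.1
        rw [h1, hq]
        exact this
    · -- distribution of restriction
      intro i
      have hq : κ.1.1 u = κ.1.1 v := not_not.1 κ.2
      have hd := κ.1.2.2 i
      rw [sum_filter_split v κ.1.1 i w] at hd
      rw [contract_sum w u v hne (fun x => κ.1.1 x.1) i]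
      simpa [hq] using hd
    · -- properness of extension
      intro a b hab
      obtain ⟨hGab, hedge⟩ := SimpleGraph.deleteEdges_adj.1 hab
      simp only [Set.mem_singleton_iff] at hedge
      show (if h : a = v then κ'.1 ⟨u, hne⟩ else κ'.1 ⟨a, h⟩)
          ≠ (if h : b = v then κ'.1 ⟨u, hne⟩ else κ'.1 ⟨b, h⟩)
      by_cases ha : a = v
      · have hb : b ≠ v := fun h => hGab.ne (ha.trans h.symm)
        rw [dif_pos ha, dif_neg hb]
        have hbu : b ≠ u := by
          rintro rfl
          exact hedge (by rw [ha, Sym2.eq_swap])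
        exact κ'.2.1 ⟨u, hne⟩ ⟨b, hb⟩ ⟨fun h => hbu (congrArg Subtype.val h).symm,
          Or.inr (Or.inl ⟨rfl, ha ▸ hGab⟩)⟩
      · by_cases hb : b = v
        · rw [dif_pos hb, dif_neg ha]
          have hau : a ≠ u := by
            rintro rfl
            exact hedge (by rw [hb])
          exact κ'.2.1 ⟨a, ha⟩ ⟨u, hne⟩ ⟨fun h => hau (congrArg Subtype.val h),
            Or.inr (Or.inr ⟨rfl, hb ▸ hGab⟩)⟩
        · rw [dif_neg ha, dif_neg hb]
          exact κ'.2.1 ⟨a, ha⟩ ⟨b, hb⟩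
            ⟨fun h => hGab.ne (congrArg Subtype.val h), Or.inl hGab⟩
    · -- distribution of extension
      intro i
      have hd := κ'.2.2 i
      rw [contract_sum w u v hne κ'.1 i] at hd
      rw [sum_filter_split v _ i w]
      rw [dif_pos rfl]
      rw [hd]
      congr 1
      exact Finset.sum_congr
        (Finset.filter_congr fun x _ => by rw [dif_neg x.2]) (fun _ _ => rfl)
    · -- the extension has equal colors at u and v
      simp [hne]
    · -- left inverse
      intro κ
      have hq : κ.1.1 u = κ.1.1 v := not_not.1 κ.2
      apply Subtype.ext
      apply Subtype.ext
      funext y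
      by_cases hy : y = v
      · subst hy; simpa using hq
      · simp [hy]
    · -- right inverse
      intro κ'
      apply Subtype.ext
      funext x
      simp [x.2]

theorem csf_deletion_contraction {V : Type*} [Fintype V] [DecidableEq V]
    (G : SimpleGraph V) (w : V → ℕ) (hw : ∀ x, 0 < w x) (u v : V) (he : G.Adj u v) :
    csf G w = csf (G.deleteEdges {s(u, v)}) w
      - csf (G.contractEdge u v) (contractWeight w u v) := by
  funext d
  have key := csf_key G w hw u v he d
  show (csfCoeff G w d : ℚ)
    = (csfCoeff (G.deleteEdges {s(u, v)}) w d : ℚ)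
      - (csfCoeff (G.contractEdge u v) (contractWeight w u v) d : ℚ)
  rw [key]
  push_cast
  ring
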